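/- Let A₁,...,A_N be 2×2 upper-triangular complex matrices, λ ∈ (0,1) and M > 0, such that: (i) the diagonal entries of every A_j have absolute value at most 1; (ii) every A_j is either diagonal or has at least one diagonal entry of absolute value less than λ; (iii) every off-diagonal entry of every A_j has absolute value at most M. Then sup_{n≥1} max_{i₁,...,i_n} ‖A_{i_n}···A_{i_1}‖ ≤ 1 + 2M/(1−λ). -/

import Mathlib

noncomputable def opNormC (A : Matrix (Fin 2) (Fin 2) ℂ) : ℝ :=
  ‖LinearMap.toContinuousLinearMap (Matrix.toEuclideanLin A)‖

/-- Product A_{σ(n)} ⋯ A_{σ(1)}. -/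
noncomputable def prodW {N : ℕ} (A : Fin N → Matrix (Fin 2) (Fin 2) ℂ) (σ : ℕ → Fin N) :
    ℕ → Matrix (Fin 2) (Fin 2) ℂ
  | 0 => 1
  | n + 1 => A (σ (n + 1)) * prodW A σ n


lemma opnorm_upper (P : Matrix (Fin 2) (Fin 2) ℂ) (C : ℝ) (hC : 0 ≤ C)
    (h10 : P 1 0 = 0) (h00 : ‖P 0 0‖ ≤ 1) (h11 : ‖P 1 1‖ ≤ 1) (h01 : ‖P 0 1‖ ≤ C) :
    ‖LinearMap.toContinuousLinearMap (Matrix.toEuclideanLin P)‖ ≤ 1 + C := by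
  apply ContinuousLinearMap.opNorm_le_bound _ (by positivity)
  intro x
  have hfx : ∀ i, (Matrix.toEuclideanLin P x) i = P i 0 * x 0 + P i 1 * x 1 := by
    intro i
    fin_cases i <;> simp [Matrix.toEuclideanLin_apply, Matrix.mulVec, dotProduct, Fin.sum_univ_two]
  set a := ‖x 0‖ with ha
  set b := ‖x 1‖ with hb
  have hxnorm : ‖x‖ = Real.sqrt (a^2 + b^2) := by
    rw [EuclideanSpace.norm_eq, Fin.sum_univ_two]
  have hfnorm : ‖(LinearMap.toContinuousLinearMap (Matrix.toEuclideanLin P)) x‖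
      = Real.sqrt (‖P 0 0 * x 0 + P 0 1 * x 1‖^2 + ‖P 1 1 * x 1‖^2) := by
    rw [show ((LinearMap.toContinuousLinearMap (Matrix.toEuclideanLin P)) x)
        = Matrix.toEuclideanLin P x from rfl]
    rw [EuclideanSpace.norm_eq, Fin.sum_univ_two, hfx 0, hfx 1, h10]
    norm_num
  rw [hfnorm, hxnorm]
  have h1 : ‖P 0 0 * x 0 + P 0 1 * x 1‖ ≤ a + C*b := by
    calc ‖P 0 0 * x 0 + P 0 1 * x 1‖ ≤ ‖P 0 0‖*‖x 0‖ + ‖P 0 1‖*‖x 1‖ := by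
          refine (norm_add_le _ _).trans ?_
          simp [norm_mul]
      _ ≤ a + C*b := by
          have := norm_nonneg (x 0); have := norm_nonneg (x 1)
          nlinarith
  have h2 : ‖P 1 1 * x 1‖ ≤ b := by
    rw [norm_mul]; nlinarith [norm_nonneg (x 1)]
  have key : ‖P 0 0 * x 0 + P 0 1 * x 1‖^2 + ‖P 1 1 * x 1‖^2 ≤ (1+C)^2 * (a^2+b^2) := by
    have ha0 : 0 ≤ a := norm_nonneg _
    have hb0 : 0 ≤ b := norm_nonneg _
    have hy0 : 0 ≤ ‖P 0 0 * x 0 + P 0 1 * x 1‖ := norm_nonneg _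
    have hy1 : 0 ≤ ‖P 1 1 * x 1‖ := norm_nonneg _
    nlinarith [sq_nonneg (a - b), sq_nonneg (C*a)]
  calc Real.sqrt (‖P 0 0 * x 0 + P 0 1 * x 1‖^2 + ‖P 1 1 * x 1‖^2)
      ≤ Real.sqrt ((1+C)^2 * (a^2+b^2)) := Real.sqrt_le_sqrt key
    _ = (1+C) * Real.sqrt (a^2+b^2) := by
        rw [Real.sqrt_mul (by positivity), Real.sqrt_sq (by positivity)]

set_option maxHeartbeats 1600000 in
lemma key_inv {N : ℕ} (A : Fin N → Matrix (Fin 2) (Fin 2) ℂ)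
    (lam M : ℝ) (hlam : 0 < lam) (hlam1 : lam < 1) (hM : 0 < M)
    (htri : ∀ j, A j 1 0 = 0)
    (hdiag : ∀ j, ‖A j 0 0‖ ≤ 1 ∧ ‖A j 1 1‖ ≤ 1)
    (hcontract : ∀ j, A j 0 1 = 0 ∨ ‖A j 0 0‖ < lam ∨ ‖A j 1 1‖ < lam)
    (hoff : ∀ j, ‖A j 0 1‖ ≤ M) (σ : ℕ → Fin N) :
    ∀ n : ℕ, (prodW A σ n) 1 0 = 0 ∧ ‖(prodW A σ n) 0 0‖ ≤ 1 ∧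
      ∃ w : ℝ, 0 ≤ w ∧ w ≤ 1 ∧ ‖(prodW A σ n) 1 1‖ ≤ w ∧
        ‖(prodW A σ n) 0 1‖ ≤ M * (2 - w) / (1 - lam) := by
  have h1lam : 0 < 1 - lam := by linarith
  intro n
  induction n with
  | zero =>
    refine ⟨by simp [prodW, Matrix.one_apply], by simp [prodW, Matrix.one_apply], 1, by norm_num,
      le_refl 1, by simp [prodW, Matrix.one_apply], ?_⟩
    simp [prodW, Matrix.one_apply]
    positivity
  | succ n ih =>
    obtain ⟨h10, h00, w, hw0, hw1, h11, h01⟩ := ih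
    set j := σ (n + 1)
    set P := prodW A σ n
    have e10 : (prodW A σ (n+1)) 1 0 = A j 1 0 * P 0 0 + A j 1 1 * P 1 0 := by
      simp [prodW, Matrix.mul_apply, Fin.sum_univ_two]; rfl
    have e00 : (prodW A σ (n+1)) 0 0 = A j 0 0 * P 0 0 + A j 0 1 * P 1 0 := by
      simp [prodW, Matrix.mul_apply, Fin.sum_univ_two]; rfl
    have e11 : (prodW A σ (n+1)) 1 1 = A j 1 0 * P 0 1 + A j 1 1 * P 1 1 := by
      simp [prodW, Matrix.mul_apply, Fin.sum_univ_two]; rfl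
    have e01 : (prodW A σ (n+1)) 0 1 = A j 0 0 * P 0 1 + A j 0 1 * P 1 1 := by
      simp [prodW, Matrix.mul_apply, Fin.sum_univ_two]; rfl
    have hA00 := (hdiag j).1
    have hA11 := (hdiag j).2
    have hA00' : 0 ≤ ‖A j 0 0‖ := norm_nonneg _
    have hA11' : 0 ≤ ‖A j 1 1‖ := norm_nonneg _
    have hP01' : 0 ≤ ‖P 0 1‖ := norm_nonneg _
    have hP11' : 0 ≤ ‖P 1 1‖ := norm_nonneg _
    refine ⟨by rw [e10, htri j, h10]; ring, ?_, ?_⟩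
    · rw [e00, h10, mul_zero, add_zero, norm_mul]
      nlinarith [norm_nonneg (P 0 0)]
    · have b11 : ‖(prodW A σ (n+1)) 1 1‖ ≤ ‖A j 1 1‖ * w := by
        rw [e11, htri j, zero_mul, zero_add, norm_mul]
        nlinarith
      have b01 : ‖(prodW A σ (n+1)) 0 1‖ ≤ ‖A j 0 0‖ * ‖P 0 1‖ + ‖A j 0 1‖ * ‖P 1 1‖ := by
        rw [e01]
        refine (norm_add_le _ _).trans (le_of_eq ?_)
        rw [norm_mul, norm_mul]
      rcases hcontract j with hc | hc | hc
      · -- diagonal case : off-diagonal entry zero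
        refine ⟨w, hw0, hw1, b11.trans (by nlinarith), ?_⟩
        refine b01.trans ?_
        rw [hc, norm_zero, zero_mul, add_zero]
        calc ‖A j 0 0‖ * ‖P 0 1‖ ≤ ‖P 0 1‖ := by nlinarith
          _ ≤ M * (2 - w) / (1 - lam) := h01
      · -- ‖A00‖ < lam
        refine ⟨w, hw0, hw1, b11.trans (by nlinarith), ?_⟩
        refine b01.trans ?_
        have h1 : ‖A j 0 0‖ * ‖P 0 1‖ ≤ lam * (M * (2 - w) / (1 - lam)) := by
          nlinarith [div_nonneg (by nlinarith : (0:ℝ) ≤ M * (2 - w)) h1lam.le]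
        have h2 : ‖A j 0 1‖ * ‖P 1 1‖ ≤ M * w := by nlinarith [hoff j, norm_nonneg (A j 0 1)]
        have hD : M * (2 - w) / (1 - lam) * (1 - lam) = M * (2 - w) := by
          field_simp
        nlinarith [hD]
      · -- ‖A11‖ < lam
        refine ⟨lam * w, by positivity, by nlinarith, b11.trans (by nlinarith), ?_⟩
        refine b01.trans ?_
        have h1 : ‖A j 0 0‖ * ‖P 0 1‖ ≤ M * (2 - w) / (1 - lam) := by
          nlinarith [h01, mul_nonneg (sub_nonneg.2 hA00) hP01']
        have h2 : ‖A j 0 1‖ * ‖P 1 1‖ ≤ M * w := by nlinarith [hoff j, norm_nonneg (A j 0 1)]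
        have hD : M * (2 - w) / (1 - lam) * (1 - lam) = M * (2 - w) := by
          field_simp
        have hD2 : M * (2 - lam * w) / (1 - lam) * (1 - lam) = M * (2 - lam * w) := by
          field_simp
        nlinarith [hD, hD2]

/-- uniform bound 1 + 2M/(1−λ) for products of upper triangular
matrices whose diagonal entries have modulus ≤ 1, each matrix being either
diagonal or having a diagonal entry of modulus < λ, with off-diagonal entries
bounded by M. -/
theorem stmt10 {N : ℕ} (hN : 0 < N) (A : Fin N → Matrix (Fin 2) (Fin 2) ℂ)
    (lam M : ℝ) (hlam : 0 < lam) (hlam1 : lam < 1) (hM : 0 < M)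
    (htri : ∀ j, A j 1 0 = 0)
    (hdiag : ∀ j, ‖A j 0 0‖ ≤ 1 ∧ ‖A j 1 1‖ ≤ 1)
    (hcontract : ∀ j, A j 0 1 = 0 ∨ ‖A j 0 0‖ < lam ∨ ‖A j 1 1‖ < lam)
    (hoff : ∀ j, ‖A j 0 1‖ ≤ M) :
    ∀ n : ℕ, 1 ≤ n → ∀ σ : ℕ → Fin N, opNormC (prodW A σ n) ≤ 1 + 2 * M / (1 - lam) := by
  intro n hn σ
  obtain ⟨h10, h00, w, hw0, hw1, h11, h01⟩ :=
    key_inv A lam M hlam hlam1 hM htri hdiag hcontract hoff σ n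
  have h1lam : 0 < 1 - lam := by linarith
  have hC : 0 ≤ 2 * M / (1 - lam) := by positivity
  have h01' : ‖(prodW A σ n) 0 1‖ ≤ 2 * M / (1 - lam) := by
    refine h01.trans ?_
    rw [div_le_div_iff₀ h1lam h1lam]
    nlinarith [mul_nonneg (mul_nonneg hM.le hw0) h1lam.le]
  exact opnorm_upper _ _ hC h10 h00 (h11.trans hw1) h01'
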